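/- Let $P_1, P_2$ be strictly positive probability mass functions on a finite set $\mathcal{Y}$, let $P_1^n, P_2^n$ denote the corresponding $n$-fold product measures on $\mathcal{Y}^n$, and let $A \subseteq \mathcal{Y}^n$ satisfy $P_1^n(A) \ge \alpha$ for some $\alpha > 0$. Then $P_2^n(A) \ge \frac{\alpha}{2} \exp\left(-\frac{n D(P_1\|P_2) + \sqrt{2 n V / \alpha}}{1}\right)$ in the weak form; in particular, for every $\epsilon > 0$ and all sufficiently large $n$, $P_2^n(A) \ge \frac{\alpha}{2} e^{-n(D(P_1\|P_2)+\epsilon)}$. -/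

import Mathlib

open Finset Real Topology Filter

lemma sum_prod_fn {Y : Type*} [Fintype Y] (n : ℕ) (h : Y → ℝ) :
    ∑ yn : Fin n → Y, ∏ i, h (yn i) = (∑ y, h y) ^ n := by
  rw [← Fin.prod_const n (∑ y, h y), Finset.prod_univ_sum, Fintype.piFinset_univ]

theorem stmt_10 {Y : Type*} [Fintype Y] (P1 P2 : Y → ℝ)
    (h1 : ∀ y, 0 < P1 y) (h2 : ∀ y, 0 < P2 y)
    (hs1 : ∑ y, P1 y = 1) (hs2 : ∑ y, P2 y = 1)
    (α : ℝ) (hα : 0 < α) (ε : ℝ) (hε : 0 < ε) :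
    ∃ N : ℕ, ∀ n ≥ N, ∀ A : Finset (Fin n → Y),
      α ≤ ∑ yn ∈ A, ∏ i, P1 (yn i) →
      α / 2 * Real.exp (-(n : ℝ) * ((∑ y, P1 y * Real.log (P1 y / P2 y)) + ε))
        ≤ ∑ yn ∈ A, ∏ i, P2 (yn i) := by
  classical
  set g : Y → ℝ := fun y => Real.log (P1 y / P2 y) with hg
  set D : ℝ := ∑ y, P1 y * g y with hD
  set M : ℝ → ℝ := fun t => ∑ y, P1 y * Real.exp (t * g y) with hM
  have hM0 : M 0 = 1 := by
    simp [hM, hs1]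
  -- derivative of M at 0 is D
  have hderiv : HasDerivAt M D 0 := by
    have : HasDerivAt M (∑ y, P1 y * (g y * Real.exp (0 * g y))) 0 := by
      apply HasDerivAt.fun_sum
      intro y _
      have h0 : HasDerivAt (fun t : ℝ => t * g y) (g y) 0 := (hasDerivAt_id 0).mul_const _ |>.congr_deriv (by ring)
      exact (h0.exp.const_mul (P1 y)).congr_deriv (by ring)
    simpa [hD] using this
  -- find λ0 > 0 with M λ0 < 1 + λ0 * (D + ε)
  obtain ⟨l, hl0, hlM⟩ : ∃ l : ℝ, 0 < l ∧ M l < 1 + l * (D + ε) := by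
    have hslope := hasDerivAt_iff_tendsto_slope.mp hderiv
    have hsub : 𝓝[>] (0:ℝ) ≤ 𝓝[≠] (0:ℝ) := nhdsWithin_mono _ (by intro x hx; exact ne_of_gt hx)
    have h2 : Filter.Tendsto (slope M 0) (𝓝[>] 0) (𝓝 D) := hslope.mono_left hsub
    have h3 : ∀ᶠ t in 𝓝[>] (0:ℝ), slope M 0 t < D + ε :=
      h2.eventually (eventually_lt_nhds (by linarith))
    have h4 : ∀ᶠ t in 𝓝[>] (0:ℝ), 0 < t := eventually_mem_nhdsWithin
    obtain ⟨t, ht1, ht2⟩ := (h3.and h4).exists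
    refine ⟨t, ht2, ?_⟩
    have : slope M 0 t = (M t - 1) / t := by simp [slope_def_field, hM0]
    rw [this] at ht1
    have := (div_lt_iff₀ ht2).mp ht1
    linarith
  set r : ℝ := M l * Real.exp (-l * (D + ε)) with hr
  have hne : Nonempty Y := by
    rcases isEmpty_or_nonempty Y with h | h
    · simp at hs1
    · exact h
  have hMpos : 0 < M l :=
    Finset.sum_pos (fun y _ => mul_pos (h1 y) (Real.exp_pos _)) Finset.univ_nonempty
  have hr0 : 0 ≤ r := le_of_lt (mul_pos hMpos (Real.exp_pos _))
  have hr1 : r < 1 := by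
    have h5 : (1:ℝ) + l * (D + ε) ≤ Real.exp (l * (D + ε)) := by
      linarith [Real.add_one_le_exp (l * (D + ε))]
    have : M l < Real.exp (l * (D + ε)) := lt_of_lt_of_le hlM (by linarith)
    calc r = M l * Real.exp (-(l * (D + ε))) := by rw [hr]; ring_nf
      _ < Real.exp (l * (D + ε)) * Real.exp (-(l * (D + ε))) := by
          apply mul_lt_mul_of_pos_right this (Real.exp_pos _)
      _ = 1 := by rw [← Real.exp_add]; ring_nf; exact Real.exp_zero
  -- choose N
  obtain ⟨N, hN⟩ : ∃ N : ℕ, ∀ n ≥ N, r ^ n ≤ α / 2 := by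
    have := tendsto_pow_atTop_nhds_zero_of_lt_one hr0 hr1
    have := this.eventually (eventually_le_nhds (by positivity : (0:ℝ) < α / 2))
    exact this.exists_forall_of_atTop
  refine ⟨N, fun n hn A hA => ?_⟩
  set S : (Fin n → Y) → ℝ := fun yn => ∑ i, g (yn i) with hS
  -- Chernoff bound: P1^n of the bad set ≤ r^n
  have hbad : ∑ yn ∈ Finset.univ.filter (fun yn : Fin n → Y => (n : ℝ) * (D + ε) < S yn),
      ∏ i, P1 (yn i) ≤ r ^ n := by
    have step1 : ∀ yn ∈ Finset.univ.filter (fun yn : Fin n → Y => (n : ℝ) * (D + ε) < S yn),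
        ∏ i, P1 (yn i) ≤ (∏ i, P1 (yn i)) * Real.exp (l * (S yn - n * (D + ε))) := by
      intro yn hyn
      rw [Finset.mem_filter] at hyn
      have h6 : 0 < l * (S yn - n * (D + ε)) := by
        have := hyn.2; nlinarith
      nth_rewrite 1 [← mul_one (∏ i, P1 (yn i))]
      apply mul_le_mul_of_nonneg_left _ (Finset.prod_nonneg fun i _ => (h1 _).le)
      rw [← Real.exp_zero]
      exact Real.exp_le_exp.mpr h6.le
    calc ∑ yn ∈ Finset.univ.filter (fun yn : Fin n → Y => (n : ℝ) * (D + ε) < S yn),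
          ∏ i, P1 (yn i)
        ≤ ∑ yn ∈ Finset.univ.filter (fun yn : Fin n → Y => (n : ℝ) * (D + ε) < S yn),
            (∏ i, P1 (yn i)) * Real.exp (l * (S yn - n * (D + ε))) :=
          Finset.sum_le_sum step1
      _ ≤ ∑ yn : Fin n → Y, (∏ i, P1 (yn i)) * Real.exp (l * (S yn - n * (D + ε))) := by
          apply Finset.sum_le_sum_of_subset_of_nonneg (Finset.filter_subset _ _)
          intro yn _ _
          exact mul_nonneg (Finset.prod_nonneg fun i _ => (h1 _).le) (Real.exp_pos _).le
      _ = r ^ n := by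
          have key : ∀ yn : Fin n → Y,
              (∏ i, P1 (yn i)) * Real.exp (l * (S yn - n * (D + ε)))
              = ∏ i, (P1 (yn i) * Real.exp (l * g (yn i)) * Real.exp (-l * (D + ε))) := by
            intro yn
            simp only [hS]
            rw [Finset.prod_mul_distrib, Finset.prod_mul_distrib, mul_assoc, ← Real.exp_sum,
              ← Real.exp_sum, ← Real.exp_add, ← Finset.mul_sum]
            congr 1
            rw [Finset.sum_const, Finset.card_univ, Fintype.card_fin, nsmul_eq_mul]
            ring
          rw [Finset.sum_congr rfl (fun yn _ => key yn), sum_prod_fn n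
            (fun y => P1 y * Real.exp (l * g y) * Real.exp (-l * (D + ε)))]
          rw [hr, ← Finset.sum_mul]
  -- the good part of A
  set B : Finset (Fin n → Y) := A.filter (fun yn => S yn ≤ (n : ℝ) * (D + ε)) with hB
  have hABbad : A \ B ⊆ Finset.univ.filter (fun yn : Fin n → Y => (n : ℝ) * (D + ε) < S yn) := by
    intro yn hyn
    rw [Finset.mem_sdiff, hB, Finset.mem_filter] at hyn
    rw [Finset.mem_filter]
    refine ⟨Finset.mem_univ _, ?_⟩
    by_contra h
    exact hyn.2 ⟨hyn.1, not_lt.mp h⟩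
  have hP1B : α / 2 ≤ ∑ yn ∈ B, ∏ i, P1 (yn i) := by
    have hsplit : ∑ yn ∈ A, ∏ i, P1 (yn i)
        = ∑ yn ∈ B, ∏ i, P1 (yn i) + ∑ yn ∈ A \ B, ∏ i, P1 (yn i) := by
      rw [← Finset.sum_union (Finset.disjoint_sdiff)]
      congr 1
      exact (Finset.union_sdiff_of_subset (Finset.filter_subset _ _)).symm
    have hsd : ∑ yn ∈ A \ B, ∏ i, P1 (yn i) ≤ r ^ n := by
      refine le_trans (Finset.sum_le_sum_of_subset_of_nonneg hABbad ?_) hbad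
      intro yn _ _; exact Finset.prod_nonneg fun i _ => (h1 _).le
    have := hN n hn
    linarith
  -- relate P2 to P1 on B
  have hP2B : ∀ yn ∈ B, (∏ i, P1 (yn i)) * Real.exp (-(n : ℝ) * (D + ε)) ≤ ∏ i, P2 (yn i) := by
    intro yn hyn
    rw [hB, Finset.mem_filter] at hyn
    have hpt : ∀ y, P2 y = P1 y * Real.exp (-(g y)) := by
      intro y
      rw [hg]
      simp only []
      rw [Real.exp_neg, Real.exp_log (div_pos (h1 y) (h2 y))]
      have hne1 : P1 y ≠ 0 := (h1 y).ne'
      field_simp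
    have heq : ∏ i, P2 (yn i) = (∏ i, P1 (yn i)) * Real.exp (-S yn) := by
      calc ∏ i, P2 (yn i) = ∏ i, (P1 (yn i) * Real.exp (-(g (yn i)))) :=
            Finset.prod_congr rfl (fun i _ => hpt _)
        _ = (∏ i, P1 (yn i)) * ∏ i, Real.exp (-(g (yn i))) := Finset.prod_mul_distrib
        _ = (∏ i, P1 (yn i)) * Real.exp (∑ i, -(g (yn i))) := by rw [Real.exp_sum]
        _ = (∏ i, P1 (yn i)) * Real.exp (-S yn) := by
            simp only [hS, Finset.sum_neg_distrib]
    rw [heq]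
    apply mul_le_mul_of_nonneg_left _ (Finset.prod_nonneg fun i _ => (h1 _).le)
    exact Real.exp_le_exp.mpr (by linarith [hyn.2])
  calc α / 2 * Real.exp (-(n : ℝ) * (D + ε))
      ≤ (∑ yn ∈ B, ∏ i, P1 (yn i)) * Real.exp (-(n : ℝ) * (D + ε)) :=
        mul_le_mul_of_nonneg_right hP1B (Real.exp_pos _).le
    _ = ∑ yn ∈ B, (∏ i, P1 (yn i)) * Real.exp (-(n : ℝ) * (D + ε)) := by rw [Finset.sum_mul]
    _ ≤ ∑ yn ∈ B, ∏ i, P2 (yn i) := Finset.sum_le_sum hP2B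
    _ ≤ ∑ yn ∈ A, ∏ i, P2 (yn i) := by
        apply Finset.sum_le_sum_of_subset_of_nonneg (Finset.filter_subset _ _)
        intro yn _ _; exact Finset.prod_nonneg fun i _ => (h2 _).le
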